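/- There do not exist an integer v ≥ 2 and an 8-divisible set C of points of PG(v−1, 2) (i.e., of 1-dimensional subspaces of 𝔽₂^v) with |C| = 52. -/

import Mathlib

open scoped Classical

section PGDefs

variable {F : Type} [Field F] {M : Type} [AddCommGroup M] [Module F M]

/-- The number of points of `C` contained in the subspace `S`, i.e. `|C ∩ S|`. -/
noncomputable def interCard (C : Finset (Submodule F M)) (S : Submodule F M) : ℕ :=
  (C.filter (fun P => P ≤ S)).card

/-- `H` is a hyperplane, i.e. a subspace of codimension 1. -/
def IsHyperplane (H : Submodule F M) : Prop :=
  Module.finrank F ↥H = Module.finrank F M - 1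

/-- Every element of `C` is a point, i.e. a 1-dimensional subspace. -/
def IsPointSet (C : Finset (Submodule F M)) : Prop :=
  ∀ P ∈ C, Module.finrank F ↥P = 1

/-- `C` is `Δ`-divisible: `|C ∩ H| ≡ |C| (mod Δ)` for every hyperplane `H`. -/
def DivisibleSet (Δ : ℕ) (C : Finset (Submodule F M)) : Prop :=
  ∀ H : Submodule F M, IsHyperplane H → interCard C H ≡ C.card [MOD Δ]

noncomputable instance fintypeSubmodule [Finite M] : Fintype (Submodule F M) :=
  have : Finite (Submodule F M) :=
    Finite.of_injective (fun S => (S : Set M)) SetLike.coe_injective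
  Fintype.ofFinite _

end PGDefs

namespace NoDiv

open Module Finset

abbrev K2 := ZMod 2
abbrev Vec (v : ℕ) := Fin v → K2
abbrev Du (v : ℕ) := Module.Dual K2 (Vec v)

noncomputable instance (v : ℕ) : Fintype (Du v) :=
  have : Finite (Du v) :=
    Finite.of_injective (fun φ => (φ : Vec v → K2)) DFunLike.coe_injective
  Fintype.ofFinite _

lemma card_dual (v : ℕ) : Fintype.card (Du v) = 2 ^ v := by
  have h := card_eq_pow_finrank (K := K2) (V := Du v)
  rw [ZMod.card] at h
  rw [h, Subspace.dual_finrank_eq]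
  simp [Module.finrank_pi]

lemma card_le_ker {v : ℕ} (W : Submodule K2 (Vec v)) :
    (univ.filter fun φ : Du v => W ≤ LinearMap.ker φ).card
      = 2 ^ (v - Module.finrank K2 ↥W) := by
  have e1 : Module.finrank K2 ↥W.dualAnnihilator = v - Module.finrank K2 ↥W := by
    have h1 : Module.finrank K2 (Vec v ⧸ W) = Module.finrank K2 ↥W.dualAnnihilator :=
      (Subspace.quotEquivAnnihilator W).finrank_eq
    have h2 := Submodule.finrank_quotient_add_finrank W
    have h3 : Module.finrank K2 (Vec v) = v := by simp [Module.finrank_pi]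
    omega
  have e2 : Fintype.card ↥W.dualAnnihilator = 2 ^ (v - Module.finrank K2 ↥W) := by
    have h := card_eq_pow_finrank (K := K2) (V := ↥W.dualAnnihilator)
    rwa [ZMod.card, e1] at h
  rw [← e2]
  rw [← Fintype.card_subtype]
  apply Fintype.card_congr
  apply Equiv.subtypeEquivRight
  intro φ
  simp [Submodule.mem_dualAnnihilator, SetLike.le_def, LinearMap.mem_ker]


lemma k2cases : ∀ a : K2, a = 0 ∨ a = 1 := by decide

lemma vadd_self {v : ℕ} (x : Vec v) : x + x = 0 := by
  funext i
  have : ∀ a : K2, a + a = 0 := by decide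
  exact this (x i)

lemma eq_of_vadd_eq_zero {v : ℕ} {x y : Vec v} (h : x + y = 0) : x = y := by
  have : x + (x + y) = x + 0 := by rw [h]
  rwa [← add_assoc, vadd_self, zero_add, add_zero, eq_comm] at this

lemma U1 {v : ℕ} {s : Vec v} (hs : s ≠ 0) :
    (univ.filter fun φ : Du v => φ s = 0).card = 2 ^ (v - 1) := by
  have h := card_le_ker (K2 ∙ s)
  rw [finrank_span_singleton hs] at h
  rw [← h]
  congr 1
  apply Finset.filter_congr
  intro φ _
  simp [Submodule.span_singleton_le_iff_mem, LinearMap.mem_ker]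

lemma li2 {v : ℕ} {s u : Vec v} (hs : s ≠ 0) (hu : u ≠ 0) (hsu : s ≠ u) :
    LinearIndependent K2 ![s, u] := by
  rw [linearIndependent_fin2]
  refine ⟨by simpa using hu, fun a => ?_⟩
  rcases k2cases a with h | h <;> subst h <;> simp [hs.symm, Ne.symm hsu]

lemma U2 {v : ℕ} {s u : Vec v} (hs : s ≠ 0) (hu : u ≠ 0) (hsu : s ≠ u) :
    (univ.filter fun φ : Du v => φ s = 0 ∧ φ u = 0).card = 2 ^ (v - 2) := by
  have hfr : Module.finrank K2 ↥(Submodule.span K2 {s, u}) = 2 := by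
    have h := finrank_span_eq_card (R := K2) (li2 hs hu hsu)
    have hr : Set.range ![s, u] = {s, u} := by
      simp [Matrix.range_cons, Matrix.range_empty]
      exact Set.pair_comm u s
    rw [hr] at h
    simpa using h
  have h := card_le_ker (Submodule.span K2 {s, u})
  rw [hfr] at h
  rw [← h]
  congr 1
  apply Finset.filter_congr
  intro φ _
  simp [Submodule.span_le, Set.insert_subset_iff, LinearMap.mem_ker]

lemma li3 {v : ℕ} {s u w : Vec v} (hs : s ≠ 0) (hu : u ≠ 0) (hw : w ≠ 0)
    (hsu : s ≠ u) (hsw : s ≠ w) (huw : u ≠ w) (hsum : s + u + w ≠ 0) :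
    LinearIndependent K2 ![s, u, w] := by
  rw [Fintype.linearIndependent_iff]
  intro g hg
  rw [Fin.sum_univ_three] at hg
  simp only [Matrix.cons_val_zero, Matrix.cons_val_one, Matrix.head_cons,
    Matrix.cons_val_two, Matrix.tail_cons] at hg
  have h0 := k2cases (g 0)
  have h1 := k2cases (g 1)
  have h2 := k2cases (g 2)
  rcases h0 with h0 | h0 <;> rcases h1 with h1 | h1 <;> rcases h2 with h2 | h2 <;>
      rw [h0, h1, h2] at hg <;> simp only [zero_smul, one_smul, zero_add, add_zero] at hg
  · intro i; fin_cases i <;> simp [h0, h1, h2]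
  · exact absurd hg hw
  · exact absurd hg hu
  · exact absurd (eq_of_vadd_eq_zero hg) huw
  · exact absurd hg hs
  · exact absurd (eq_of_vadd_eq_zero hg) hsw
  · exact absurd (eq_of_vadd_eq_zero hg) hsu
  · exact absurd hg hsum

lemma U3 {v : ℕ} {s u w : Vec v} (hs : s ≠ 0) (hu : u ≠ 0) (hw : w ≠ 0)
    (hsu : s ≠ u) (hsw : s ≠ w) (huw : u ≠ w) (hsum : s + u + w ≠ 0) :
    (univ.filter fun φ : Du v => φ s = 0 ∧ φ u = 0 ∧ φ w = 0).card = 2 ^ (v - 3) := by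
  have hfr : Module.finrank K2 ↥(Submodule.span K2 {s, u, w}) = 3 := by
    have h := finrank_span_eq_card (R := K2) (li3 hs hu hw hsu hsw huw hsum)
    have hr : Set.range ![s, u, w] = {s, u, w} := by
      simp [Matrix.range_cons, Matrix.range_empty]
      ext x
      simp only [Set.mem_insert_iff, Set.mem_singleton_iff]
      tauto
    rw [hr] at h
    simpa using h
  have h := card_le_ker (Submodule.span K2 {s, u, w})
  rw [hfr] at h
  rw [← h]
  congr 1
  apply Finset.filter_congr
  intro φ _
  simp [Submodule.span_le, Set.insert_subset_iff, LinearMap.mem_ker]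


/-- nonzero functionals -/
noncomputable def Phi (v : ℕ) : Finset (Du v) := univ.filter (fun φ => φ ≠ 0)

lemma phi_count {v : ℕ} {P : Du v → Prop} [DecidablePred P] (hP : P 0) {k : ℕ}
    (h : (univ.filter P).card = 2 ^ k) :
    ((Phi v).filter P).card + 1 = 2 ^ k := by
  have he : (Phi v).filter P = (univ.filter P).erase 0 := by
    ext φ
    simp only [Phi, Finset.filter_filter, Finset.mem_filter, Finset.mem_erase, Finset.mem_univ,
      true_and]
  rw [he, Finset.card_erase_of_mem (by simp [hP])]
  have h1 : 1 ≤ (univ.filter P).card := Finset.card_pos.mpr ⟨0, by simp [hP]⟩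
  omega

lemma card_phi (v : ℕ) : (Phi v).card + 1 = 2 ^ v := by
  have he : Phi v = univ.erase 0 := Finset.filter_ne' univ 0
  rw [he, Finset.card_erase_of_mem (Finset.mem_univ _), Finset.card_univ, card_dual]
  have h1 : 1 ≤ 2 ^ v := Nat.one_le_two_pow
  omega

lemma term_quad {n : ℤ} (h : n % 8 = 4) : 0 ≤ (n - 20) * (n - 28) := by
  have hn : n = 8 * (n / 8) + 4 := by omega
  set k := n / 8 with hk
  have he : (n - 20) * (n - 28) = 64 * ((k - 2) * (k - 3)) := by rw [hn]; ring
  rw [he]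
  rcases le_or_gt k 2 with hle | hlt
  · have h1 := mul_nonneg (a := 2 - k) (b := 3 - k) (by omega) (by omega)
    nlinarith [h1]
  · have h1 := mul_nonneg (a := k - 2) (b := k - 3) (by omega) (by omega)
    nlinarith [h1]

lemma term_cub {n : ℤ} (h : n % 8 = 4) (h0 : 0 ≤ n) (h44 : n ≤ 44) :
    0 ≤ (44 - n) * ((n - 20) * (n - 28)) := by
  have : n = 4 ∨ n = 12 ∨ n = 20 ∨ n = 28 ∨ n = 36 ∨ n = 44 := by omega
  rcases this with h | h | h | h | h | h <;> rw [h] <;> norm_num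


lemma zc1 {v : ℕ} {s : Vec v} (hs : s ≠ 0) :
    ((((Phi v).filter fun φ => φ s = 0)).card : ℤ) = 2 ^ (v - 1) - 1 := by
  have h := phi_count (v := v) (P := fun φ => φ s = 0) (by simp) (U1 hs)
  have h2 := congrArg (fun n : ℕ => (n : ℤ)) h
  push_cast at h2
  linarith

lemma zc2 {v : ℕ} {s u : Vec v} (hs : s ≠ 0) (hu : u ≠ 0) (hsu : s ≠ u) :
    ((((Phi v).filter fun φ => φ s = 0 ∧ φ u = 0)).card : ℤ) = 2 ^ (v - 2) - 1 := by
  have h := phi_count (v := v) (P := fun φ => φ s = 0 ∧ φ u = 0) (by simp) (U2 hs hu hsu)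
  have h2 := congrArg (fun n : ℕ => (n : ℤ)) h
  push_cast at h2
  linarith

lemma zc3 {v : ℕ} {s u w : Vec v} (hs : s ≠ 0) (hu : u ≠ 0) (hw : w ≠ 0)
    (hsu : s ≠ u) (hsw : s ≠ w) (huw : u ≠ w) (hsum : s + u + w ≠ 0) :
    ((((Phi v).filter fun φ => φ s = 0 ∧ φ u = 0 ∧ φ w = 0)).card : ℤ) = 2 ^ (v - 3) - 1 := by
  have h := phi_count (v := v) (P := fun φ => φ s = 0 ∧ φ u = 0 ∧ φ w = 0) (by simp)
    (U3 hs hu hw hsu hsw huw hsum)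
  have h2 := congrArg (fun n : ℕ => (n : ℤ)) h
  push_cast at h2
  linarith

lemma zc3' {v : ℕ} {s u w : Vec v} (hs : s ≠ 0) (hu : u ≠ 0)
    (hsu : s ≠ u) (hw : w = s + u) :
    ((((Phi v).filter fun φ => φ s = 0 ∧ φ u = 0 ∧ φ w = 0)).card : ℤ) = 2 ^ (v - 2) - 1 := by
  have hcongr : ((Phi v).filter fun φ => φ s = 0 ∧ φ u = 0 ∧ φ w = 0)
      = ((Phi v).filter fun φ => φ s = 0 ∧ φ u = 0) := by
    apply Finset.filter_congr
    intro φ _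
    constructor
    · rintro ⟨h1, h2, _⟩; exact ⟨h1, h2⟩
    · rintro ⟨h1, h2⟩; exact ⟨h1, h2, by rw [hw, map_add, h1, h2, add_zero]⟩
  rw [hcongr]
  exact zc2 hs hu hsu

lemma sum3_iff {v : ℕ} {s u w : Vec v} : s + u + w = 0 ↔ w = s + u := by
  constructor
  · intro h; exact (eq_of_vadd_eq_zero h).symm
  · intro h; rw [h, vadd_self]

lemma ite_mul_ite (a b : Prop) [Decidable a] [Decidable b] :
    (if a then (1 : ℤ) else 0) * (if b then 1 else 0) = if a ∧ b then 1 else 0 := by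
  by_cases ha : a <;> by_cases hb : b <;> simp [ha, hb]

lemma M1 {v : ℕ} {S : Finset (Vec v)} (hS0 : (0 : Vec v) ∉ S) :
    ∑ φ ∈ Phi v, ((S.filter fun s => φ s = 0).card : ℤ)
      = S.card * ((2 : ℤ) ^ (v - 1) - 1) := by
  calc ∑ φ ∈ Phi v, ((S.filter fun s => φ s = 0).card : ℤ)
      = ∑ φ ∈ Phi v, ∑ s ∈ S, (if φ s = 0 then (1 : ℤ) else 0) :=
        Finset.sum_congr rfl fun φ _ => (Finset.sum_boole _ _).symm
    _ = ∑ s ∈ S, ∑ φ ∈ Phi v, (if φ s = 0 then (1 : ℤ) else 0) := Finset.sum_comm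
    _ = ∑ s ∈ S, ((2 : ℤ) ^ (v - 1) - 1) := by
        refine Finset.sum_congr rfl fun s hs => ?_
        rw [Finset.sum_boole]
        exact zc1 (fun h => hS0 (h ▸ hs))
    _ = S.card * ((2 : ℤ) ^ (v - 1) - 1) := by rw [Finset.sum_const, nsmul_eq_mul]


lemma M2 {v : ℕ} {S : Finset (Vec v)} (hS0 : (0 : Vec v) ∉ S) (hcard : S.card = 52) :
    ∑ φ ∈ Phi v, (((S.filter fun s => φ s = 0).card : ℤ) * ((S.filter fun s => φ s = 0).card : ℤ))
      = 52 * (((2 : ℤ) ^ (v - 1) - 1) + 51 * ((2 : ℤ) ^ (v - 2) - 1)) := by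
  have hne : ∀ s ∈ S, s ≠ 0 := fun s hs h => hS0 (h ▸ hs)
  calc ∑ φ ∈ Phi v, (((S.filter fun s => φ s = 0).card : ℤ) * ((S.filter fun s => φ s = 0).card : ℤ))
      = ∑ φ ∈ Phi v, ∑ s ∈ S, ∑ u ∈ S, (if φ s = 0 ∧ φ u = 0 then (1 : ℤ) else 0) := by
        refine Finset.sum_congr rfl fun φ _ => ?_
        rw [← Finset.sum_boole, Finset.sum_mul_sum]
        exact Finset.sum_congr rfl fun s _ => Finset.sum_congr rfl fun u _ => ite_mul_ite _ _
    _ = ∑ s ∈ S, ∑ u ∈ S, ∑ φ ∈ Phi v, (if φ s = 0 ∧ φ u = 0 then (1 : ℤ) else 0) := by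
        rw [Finset.sum_comm]
        exact Finset.sum_congr rfl fun s _ => Finset.sum_comm
    _ = ∑ s ∈ S, ∑ u ∈ S, (((Phi v).filter fun φ => φ s = 0 ∧ φ u = 0).card : ℤ) :=
        Finset.sum_congr rfl fun s _ => Finset.sum_congr rfl fun u _ => Finset.sum_boole _ _
    _ = ∑ s ∈ S, (((2 : ℤ) ^ (v - 1) - 1) + 51 * ((2 : ℤ) ^ (v - 2) - 1)) := by
        refine Finset.sum_congr rfl fun s hs => ?_
        rw [← Finset.add_sum_erase _ _ hs]
        congr 1
        · have he : ((Phi v).filter fun φ => φ s = 0 ∧ φ s = 0)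
              = ((Phi v).filter fun φ => φ s = 0) := by
            apply Finset.filter_congr; intro φ _; rw [and_self]
          rw [he]
          exact zc1 (hne s hs)
        · have hval : ∀ u ∈ S.erase s,
              (((Phi v).filter fun φ => φ s = 0 ∧ φ u = 0).card : ℤ)
                = (2 : ℤ) ^ (v - 2) - 1 := by
            intro u hu
            have hus := (Finset.mem_erase.mp hu).1
            have huS := (Finset.mem_erase.mp hu).2
            exact zc2 (hne s hs) (hne u huS) (Ne.symm hus)
          rw [Finset.sum_congr rfl hval, Finset.sum_const, nsmul_eq_mul,
            Finset.card_erase_of_mem hs, hcard]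
          norm_num
    _ = 52 * (((2 : ℤ) ^ (v - 1) - 1) + 51 * ((2 : ℤ) ^ (v - 2) - 1)) := by
        rw [Finset.sum_const, nsmul_eq_mul, hcard]
        norm_num


lemma M3 {v : ℕ} {S : Finset (Vec v)} (hS0 : (0 : Vec v) ∉ S) (hcard : S.card = 52) :
    ∃ T3 : ℤ, 0 ≤ T3 ∧
    ∑ φ ∈ Phi v, (((S.filter fun s => φ s = 0).card : ℤ) * ((S.filter fun s => φ s = 0).card : ℤ)
        * ((S.filter fun s => φ s = 0).card : ℤ))
      = 52 * (((2 : ℤ) ^ (v - 1) - 1) + 51 * ((2 : ℤ) ^ (v - 2) - 1))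
        + 52 * (51 * (2 * ((2 : ℤ) ^ (v - 2) - 1) + 50 * ((2 : ℤ) ^ (v - 3) - 1)))
        + (((2 : ℤ) ^ (v - 2) - 1) - ((2 : ℤ) ^ (v - 3) - 1)) * T3 := by
  have hne : ∀ s ∈ S, s ≠ 0 := fun s hs h => hS0 (h ▸ hs)
  set A : ℤ := (2 : ℤ) ^ (v - 1) - 1 with hA
  set B : ℤ := (2 : ℤ) ^ (v - 2) - 1 with hB
  set C : ℤ := (2 : ℤ) ^ (v - 3) - 1 with hC
  refine ⟨∑ s ∈ S, ∑ u ∈ S.erase s, (if s + u ∈ S then (1 : ℤ) else 0),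
    Finset.sum_nonneg fun s _ => Finset.sum_nonneg fun u _ => by positivity, ?_⟩
  have cube : ∀ φ : Du v,
      (((S.filter fun s => φ s = 0).card : ℤ) * ((S.filter fun s => φ s = 0).card : ℤ)
        * ((S.filter fun s => φ s = 0).card : ℤ))
      = ∑ s ∈ S, ∑ u ∈ S, ∑ w ∈ S,
          (if φ s = 0 ∧ φ u = 0 ∧ φ w = 0 then (1 : ℤ) else 0) := by
    intro φ
    have hX : ((S.filter fun s => φ s = 0).card : ℤ)
        = ∑ s ∈ S, (if φ s = 0 then (1 : ℤ) else 0) := (Finset.sum_boole _ _).symm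
    rw [hX, Finset.sum_mul_sum, Finset.sum_mul]
    refine Finset.sum_congr rfl fun s _ => ?_
    rw [Finset.sum_mul]
    refine Finset.sum_congr rfl fun u _ => ?_
    rw [Finset.mul_sum]
    refine Finset.sum_congr rfl fun w _ => ?_
    by_cases h1 : φ s = 0 <;> by_cases h2 : φ u = 0 <;> by_cases h3 : φ w = 0 <;>
      simp [h1, h2, h3]
  calc ∑ φ ∈ Phi v, (((S.filter fun s => φ s = 0).card : ℤ)
          * ((S.filter fun s => φ s = 0).card : ℤ) * ((S.filter fun s => φ s = 0).card : ℤ))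
      = ∑ φ ∈ Phi v, ∑ s ∈ S, ∑ u ∈ S, ∑ w ∈ S,
          (if φ s = 0 ∧ φ u = 0 ∧ φ w = 0 then (1 : ℤ) else 0) :=
        Finset.sum_congr rfl fun φ _ => cube φ
    _ = ∑ s ∈ S, ∑ u ∈ S, ∑ w ∈ S,
          (((Phi v).filter fun φ => φ s = 0 ∧ φ u = 0 ∧ φ w = 0).card : ℤ) := by
        rw [Finset.sum_comm]
        refine Finset.sum_congr rfl fun s _ => ?_
        rw [Finset.sum_comm]
        refine Finset.sum_congr rfl fun u _ => ?_
        rw [Finset.sum_comm]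
        exact Finset.sum_congr rfl fun w _ => Finset.sum_boole _ _
    _ = ∑ s ∈ S, ((A + 51 * B) + (51 * (2 * B + 50 * C)
          + (B - C) * ∑ u ∈ S.erase s, (if s + u ∈ S then (1 : ℤ) else 0))) := by
        refine Finset.sum_congr rfl fun s hs => ?_
        have hs0 := hne s hs
        rw [← Finset.add_sum_erase _ _ hs]
        congr 1
        · -- u = s term
          calc ∑ w ∈ S, (((Phi v).filter fun φ => φ s = 0 ∧ φ s = 0 ∧ φ w = 0).card : ℤ)
              = ∑ w ∈ S, (((Phi v).filter fun φ => φ s = 0 ∧ φ w = 0).card : ℤ) := by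
                refine Finset.sum_congr rfl fun w _ => ?_
                have he : ((Phi v).filter fun φ => φ s = 0 ∧ φ s = 0 ∧ φ w = 0)
                    = ((Phi v).filter fun φ => φ s = 0 ∧ φ w = 0) := by
                  apply Finset.filter_congr
                  intro φ _
                  constructor
                  · rintro ⟨h1, _, h3⟩; exact ⟨h1, h3⟩
                  · rintro ⟨h1, h3⟩; exact ⟨h1, h1, h3⟩
                rw [he]
            _ = A + 51 * B := by
                rw [← Finset.add_sum_erase _ _ hs]
                congr 1
                · have he : ((Phi v).filter fun φ => φ s = 0 ∧ φ s = 0)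
                      = ((Phi v).filter fun φ => φ s = 0) := by
                    apply Finset.filter_congr; intro φ _; rw [and_self]
                  rw [he, hA]
                  exact zc1 hs0
                · have hval : ∀ w ∈ S.erase s,
                      (((Phi v).filter fun φ => φ s = 0 ∧ φ w = 0).card : ℤ) = B := by
                    intro w hw
                    have hws := (Finset.mem_erase.mp hw).1
                    have hwS := (Finset.mem_erase.mp hw).2
                    rw [hB]
                    exact zc2 hs0 (hne w hwS) (Ne.symm hws)
                  rw [Finset.sum_congr rfl hval, Finset.sum_const, nsmul_eq_mul,
                    Finset.card_erase_of_mem hs, hcard]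
                  norm_num
        · -- u ≠ s terms
          have hval : ∀ u ∈ S.erase s,
              (∑ w ∈ S, (((Phi v).filter fun φ => φ s = 0 ∧ φ u = 0 ∧ φ w = 0).card : ℤ))
                = (2 * B + 50 * C) + (B - C) * (if s + u ∈ S then (1 : ℤ) else 0) := by
            intro u hu
            have hus := (Finset.mem_erase.mp hu).1
            have huS := (Finset.mem_erase.mp hu).2
            have hu0 := hne u huS
            have hsu : s ≠ u := Ne.symm hus
            rw [← Finset.add_sum_erase _ _ hs, ← Finset.add_sum_erase _ _ hu]
            have t1 : (((Phi v).filter fun φ => φ s = 0 ∧ φ u = 0 ∧ φ s = 0).card : ℤ) = B := by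
              have he : ((Phi v).filter fun φ => φ s = 0 ∧ φ u = 0 ∧ φ s = 0)
                  = ((Phi v).filter fun φ => φ s = 0 ∧ φ u = 0) := by
                apply Finset.filter_congr; intro φ _
                constructor
                · rintro ⟨h1, h2, _⟩; exact ⟨h1, h2⟩
                · rintro ⟨h1, h2⟩; exact ⟨h1, h2, h1⟩
              rw [he, hB]; exact zc2 hs0 hu0 hsu
            have t2 : (((Phi v).filter fun φ => φ s = 0 ∧ φ u = 0 ∧ φ u = 0).card : ℤ) = B := by
              have he : ((Phi v).filter fun φ => φ s = 0 ∧ φ u = 0 ∧ φ u = 0)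
                  = ((Phi v).filter fun φ => φ s = 0 ∧ φ u = 0) := by
                apply Finset.filter_congr; intro φ _
                constructor
                · rintro ⟨h1, h2, _⟩; exact ⟨h1, h2⟩
                · rintro ⟨h1, h2⟩; exact ⟨h1, h2, h2⟩
              rw [he, hB]; exact zc2 hs0 hu0 hsu
            have t3 : ∀ w ∈ (S.erase s).erase u,
                (((Phi v).filter fun φ => φ s = 0 ∧ φ u = 0 ∧ φ w = 0).card : ℤ)
                  = (if w = s + u then B else C) := by
              intro w hw
              have hwu := (Finset.mem_erase.mp hw).1
              have hw2 := (Finset.mem_erase.mp hw).2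
              have hws := (Finset.mem_erase.mp hw2).1
              have hwS := (Finset.mem_erase.mp hw2).2
              by_cases hcase : w = s + u
              · rw [if_pos hcase, hB]
                exact zc3' hs0 hu0 hsu hcase
              · rw [if_neg hcase, hC]
                refine zc3 hs0 hu0 (hne w hwS) hsu (Ne.symm hws) (Ne.symm hwu) ?_
                intro hzero
                exact hcase (sum3_iff.mp hzero)
            rw [t1, t2, Finset.sum_congr rfl t3]
            have t4 : ∑ w ∈ (S.erase s).erase u, (if w = s + u then B else C)
                = 50 * C + (B - C) * (if s + u ∈ S then (1 : ℤ) else 0) := by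
              have hsplit : ∀ w ∈ (S.erase s).erase u,
                  (if w = s + u then B else C) = C + (if w = s + u then B - C else 0) := by
                intro w _
                by_cases hcase : w = s + u <;> simp [hcase]
              rw [Finset.sum_congr rfl hsplit, Finset.sum_add_distrib, Finset.sum_const,
                Finset.sum_ite_eq' ((S.erase s).erase u) (s + u) (fun _ => B - C),
                Finset.card_erase_of_mem (Finset.mem_erase.mpr ⟨hus, huS⟩),
                Finset.card_erase_of_mem hs, hcard]
              have hmem : (s + u ∈ (S.erase s).erase u) ↔ s + u ∈ S := by
                rw [Finset.mem_erase, Finset.mem_erase]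
                constructor
                · rintro ⟨_, _, h⟩; exact h
                · intro h
                  refine ⟨fun heq => ?_, fun heq => ?_, h⟩
                  · exact hs0 (by rwa [add_eq_right] at heq)
                  · exact hu0 (by rwa [add_eq_left] at heq)
              rw [if_congr hmem rfl rfl]
              by_cases hcase : s + u ∈ S <;> simp [hcase] <;> ring
            rw [t4]
            ring
          rw [Finset.sum_congr rfl hval, Finset.sum_add_distrib, Finset.sum_const,
            ← Finset.mul_sum, Finset.card_erase_of_mem hs, hcard]
          push_cast
          ring
    _ = 52 * (A + 51 * B) + 52 * (51 * (2 * B + 50 * C))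
          + (B - C) * (∑ s ∈ S, ∑ u ∈ S.erase s, (if s + u ∈ S then (1 : ℤ) else 0)) := by
        rw [Finset.sum_add_distrib, Finset.sum_const, Finset.sum_add_distrib, Finset.sum_const,
          ← Finset.mul_sum, hcard]
        push_cast
        ring


lemma ker_rank {v : ℕ} (φ : Du v) (hφ : φ ≠ 0) :
    Module.finrank K2 ↥(LinearMap.ker φ) = v - 1 := by
  have hrange : LinearMap.range φ = ⊤ := by
    rcases DFunLike.ne_iff.mp hφ with ⟨x, hx⟩
    have hx' : φ x ≠ 0 := by simpa using hx
    apply Submodule.eq_top_iff'.mpr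
    intro y
    rcases k2cases y with hy | hy
    · rw [hy]; exact Submodule.zero_mem _
    · rw [hy]
      have h1 : φ x = 1 := by
        rcases k2cases (φ x) with h | h
        · exact absurd h hx'
        · exact h
      exact ⟨x, h1⟩
  have h := LinearMap.finrank_range_add_finrank_ker φ
  rw [hrange] at h
  have htop : Module.finrank K2 ↥(⊤ : Submodule K2 K2) = 1 := by
    rw [finrank_top]; exact Module.finrank_self K2
  have hV : Module.finrank K2 (Vec v) = v := by simp [Module.finrank_pi]
  rw [htop, hV] at h
  omega

lemma key : ∀ v : ℕ, ∀ S : Finset (Vec v), (0 : Vec v) ∉ S → S.card = 52 →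
    (∀ φ : Du v, φ ≠ 0 → (S.filter fun s => φ s = 0).card % 8 = 4) → False := by
  intro v
  induction v using Nat.strong_induction_on with
  | _ v ih =>
  intro S hS0 hScard hdiv
  -- v ≥ 6 since S consists of 52 distinct nonzero vectors
  have hv6 : 6 ≤ v := by
    have hsub : S ⊆ Finset.univ.erase 0 := fun s hs =>
      Finset.mem_erase.mpr ⟨fun h => hS0 (h ▸ hs), Finset.mem_univ _⟩
    have hle := Finset.card_le_card hsub
    rw [Finset.card_erase_of_mem (Finset.mem_univ _), Finset.card_univ, hScard] at hle
    have hcv : Fintype.card (Vec v) = 2 ^ v := by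
      simp [ZMod.card]
    rw [hcv] at hle
    by_contra hlt
    push_neg at hlt
    have : 2 ^ v ≤ 2 ^ 5 := Nat.pow_le_pow_right (by norm_num) (by omega)
    norm_num at this
    omega
  -- abbreviations
  set n : Du v → ℤ := fun φ => ((S.filter fun s => φ s = 0).card : ℤ) with hn
  have hmod : ∀ φ ∈ Phi v, n φ % 8 = 4 := by
    intro φ hφ
    have hφ0 : φ ≠ 0 := (Finset.mem_filter.mp hφ).2
    have h := hdiv φ hφ0
    have h2 := congrArg (fun m : ℕ => (m : ℤ)) h
    push_cast at h2
    simpa using h2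
  -- power abbreviations
  set q : ℤ := (2 : ℤ) ^ (v - 3) with hq
  have hA : (2 : ℤ) ^ (v - 1) = 4 * q := by
    rw [hq, show v - 1 = (v - 3) + 2 by omega, pow_add]; ring
  have hB : (2 : ℤ) ^ (v - 2) = 2 * q := by
    rw [hq, show v - 2 = (v - 3) + 1 by omega, pow_add]; ring
  have hPhiCard : ((Phi v).card : ℤ) = 8 * q - 1 := by
    have h := card_phi v
    have h2 := congrArg (fun m : ℕ => (m : ℤ)) h
    push_cast at h2
    have h3 : (2 : ℤ) ^ v = 8 * q := by
      calc (2 : ℤ) ^ v = 2 ^ ((v - 3) + 3) := by rw [show (v - 3) + 3 = v by omega]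
        _ = 8 * q := by rw [pow_add, hq]; ring
    rw [h3] at h2
    linarith
  have hM1 : ∑ φ ∈ Phi v, n φ = 52 * (4 * q - 1) := by
    have h := M1 hS0
    rw [hScard] at h
    rw [hn]
    simp only [hA] at h
    push_cast at h ⊢
    linarith
  have hM2 : ∑ φ ∈ Phi v, n φ * n φ = 52 * ((4 * q - 1) + 51 * (2 * q - 1)) := by
    have h := M2 hS0 hScard
    rw [hn]
    rw [hA, hB] at h
    exact h
  -- quadratic inequality: forces v ≥ 10
  have hquad : (0 : ℤ) ≤ ∑ φ ∈ Phi v, (n φ - 20) * (n φ - 28) :=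
    Finset.sum_nonneg fun φ hφ => term_quad (hmod φ hφ)
  have hquadeq : ∑ φ ∈ Phi v, (n φ - 20) * (n φ - 28)
      = ∑ φ ∈ Phi v, n φ * n φ - 48 * ∑ φ ∈ Phi v, n φ + 560 * ((Phi v).card : ℤ) := by
    have hterm : ∀ φ ∈ Phi v, (n φ - 20) * (n φ - 28) = n φ * n φ - 48 * n φ + 560 :=
      fun φ _ => by ring
    rw [Finset.sum_congr rfl hterm, Finset.sum_add_distrib, Finset.sum_sub_distrib,
      ← Finset.mul_sum, Finset.sum_const, nsmul_eq_mul]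
    ring
  have hq96 : 96 ≤ q := by
    rw [hquadeq, hM1, hM2, hPhiCard] at hquad
    linarith
  have hv10 : 10 ≤ v := by
    by_contra hlt
    push_neg at hlt
    have hle : (2 : ℤ) ^ (v - 3) ≤ (2 : ℤ) ^ 6 := by
      apply pow_le_pow_right₀ (by norm_num)
      omega
    rw [← hq] at hle
    norm_num at hle
    omega
  -- case split on spanning
  by_cases hsp : ∃ φ : Du v, φ ≠ 0 ∧ ∀ s ∈ S, φ s = 0
  · -- descent to dimension v - 1
    obtain ⟨φ0, hφ0ne, hφ0⟩ := hsp
    set W := LinearMap.ker φ0 with hWdef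
    have hWrank : Module.finrank K2 ↥W = v - 1 := by
      rw [hWdef]; exact ker_rank φ0 hφ0ne
    have hWfr2 : Module.finrank K2 ↥W = Module.finrank K2 (Vec (v - 1)) := by
      rw [hWrank]; simp [Module.finrank_pi]
    obtain ⟨e⟩ := FiniteDimensional.nonempty_linearEquiv_of_finrank_eq hWfr2
    have hmemW : ∀ s ∈ S, s ∈ W := fun s hs => LinearMap.mem_ker.mpr (hφ0 s hs)
    set f : {x // x ∈ S} → Vec (v - 1) := fun a => e ⟨a.1, hmemW a.1 a.2⟩ with hf
    have hfinj : Function.Injective f := by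
      intro a b hab
      have h1 := e.injective hab
      exact Subtype.ext (Subtype.mk_eq_mk.mp h1)
    set S' : Finset (Vec (v - 1)) := S.attach.image f with hS'
    have hcard' : S'.card = 52 := by
      rw [hS', Finset.card_image_of_injective _ hfinj, Finset.card_attach, hScard]
    have hS0' : (0 : Vec (v - 1)) ∉ S' := by
      intro h0
      obtain ⟨a, _, ha⟩ := Finset.mem_image.mp h0
      have h1 : (⟨a.1, hmemW a.1 a.2⟩ : ↥W) = 0 := by
        apply e.injective
        rw [map_zero]
        exact ha
      have h2 : a.1 = 0 := by
        simpa using congrArg Subtype.val h1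
      exact hS0 (h2 ▸ a.2)
    have hdiv' : ∀ ψ : Du (v - 1), ψ ≠ 0 → (S'.filter fun t => ψ t = 0).card % 8 = 4 := by
      intro ψ hψ
      obtain ⟨g, hg⟩ := LinearMap.exists_extend (ψ.comp (e.toLinearMap))
      have hgs : ∀ a : {x // x ∈ S}, g a.1 = ψ (f a) := by
        intro a
        have h1 := LinearMap.congr_fun hg ⟨a.1, hmemW a.1 a.2⟩
        simpa [hf] using h1
      have hgne : g ≠ 0 := by
        intro hg0
        rcases DFunLike.ne_iff.mp hψ with ⟨y, hy⟩
        have h1 := LinearMap.congr_fun hg (e.symm y)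
        rw [hg0] at h1
        simp at h1
        apply hy
        simpa using h1.symm
      have hcnt : (S'.filter fun t => ψ t = 0).card = (S.filter fun s => g s = 0).card := by
        have him : S'.filter (fun t => ψ t = 0) = (S.attach.filter fun a => g a.1 = 0).image f := by
          ext t
          simp only [hS', Finset.mem_filter, Finset.mem_image, Finset.mem_attach, true_and]
          constructor
          · rintro ⟨⟨a, rfl⟩, ht⟩
            exact ⟨a, by rw [hgs a]; exact ht, rfl⟩
          · rintro ⟨a, hga, rfl⟩
            exact ⟨⟨a, rfl⟩, by rw [← hgs a]; exact hga⟩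
        rw [him, Finset.card_image_of_injective _ hfinj]
        apply Finset.card_bij (fun a _ => a.1)
        · intro a ha
          exact Finset.mem_filter.mpr ⟨a.2, (Finset.mem_filter.mp ha).2⟩
        · intro a _ b _ hab
          exact Subtype.ext hab
        · intro b hb
          exact ⟨⟨b, (Finset.mem_filter.mp hb).1⟩,
            Finset.mem_filter.mpr ⟨Finset.mem_attach _ _, (Finset.mem_filter.mp hb).2⟩, rfl⟩
      rw [hcnt]
      exact hdiv g hgne
    exact ih (v - 1) (by omega) S' hS0' hcard' hdiv'
  · -- spanning: cubic inequality
    push_neg at hsp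
    have hub : ∀ φ ∈ Phi v, n φ ≤ 44 := by
      intro φ hφ
      have hφ0 : φ ≠ 0 := (Finset.mem_filter.mp hφ).2
      have hle : (S.filter fun s => φ s = 0).card ≤ 52 := by
        rw [← hScard]; exact Finset.card_filter_le _ _
      have hne52 : (S.filter fun s => φ s = 0).card ≠ 52 := by
        intro h52
        have heq : S.filter (fun s => φ s = 0) = S := by
          apply Finset.eq_of_subset_of_card_le (Finset.filter_subset _ _)
          rw [h52, hScard]
        have hall : ∀ s ∈ S, φ s = 0 := by
          intro s hs
          have hmem : s ∈ S.filter (fun s => φ s = 0) := by rw [heq]; exact hs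
          exact (Finset.mem_filter.mp hmem).2
        obtain ⟨s', hs', hne⟩ := hsp φ hφ0
        exact hne (hall s' hs')
      have hmodn := hdiv φ hφ0
      have : (S.filter fun s => φ s = 0).card ≤ 44 := by omega
      rw [hn]
      push_cast
      omega
    have hlb : ∀ φ ∈ Phi v, (0 : ℤ) ≤ n φ := fun φ _ => by rw [hn]; positivity
    have hcub : (0 : ℤ) ≤ ∑ φ ∈ Phi v, (44 - n φ) * ((n φ - 20) * (n φ - 28)) :=
      Finset.sum_nonneg fun φ hφ => term_cub (hmod φ hφ) (hlb φ hφ) (hub φ hφ)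
    obtain ⟨T3, hT3nonneg, hM3⟩ := M3 hS0 hScard
    have hM3' : ∑ φ ∈ Phi v, n φ * n φ * n φ
        = 52 * ((4 * q - 1) + 51 * (2 * q - 1))
          + 52 * (51 * (2 * (2 * q - 1) + 50 * (q - 1)))
          + ((2 * q - 1) - (q - 1)) * T3 := by
      rw [hA, hB, ← hq] at hM3
      exact hM3
    have hcubeq : ∑ φ ∈ Phi v, (44 - n φ) * ((n φ - 20) * (n φ - 28))
        = -(∑ φ ∈ Phi v, n φ * n φ * n φ) + 92 * ∑ φ ∈ Phi v, n φ * n φ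
          - 2672 * ∑ φ ∈ Phi v, n φ + 24640 * ((Phi v).card : ℤ) := by
      have hterm : ∀ φ ∈ Phi v, (44 - n φ) * ((n φ - 20) * (n φ - 28))
          = -(n φ * n φ * n φ) + 92 * (n φ * n φ) - 2672 * n φ + 24640 :=
        fun φ _ => by ring
      rw [Finset.sum_congr rfl hterm, Finset.sum_add_distrib, Finset.sum_sub_distrib,
        Finset.sum_add_distrib, Finset.sum_neg_distrib, ← Finset.mul_sum, ← Finset.mul_sum,
        Finset.sum_const, nsmul_eq_mul]
      ring
    have hqT : (0 : ℤ) ≤ q * T3 := mul_nonneg (by positivity) hT3nonneg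
    have hq128 : (128 : ℤ) ≤ q := by
      have hle : (2 : ℤ) ^ 7 ≤ (2 : ℤ) ^ (v - 3) := by
        apply pow_le_pow_right₀ (by norm_num)
        omega
      rw [← hq] at hle
      norm_num at hle
      exact hle
    rw [hcubeq, hM1, hM2, hM3', hPhiCard] at hcub
    nlinarith [hcub, hqT, hq128]


lemma point_gen {v : ℕ} (P : Submodule K2 (Vec v)) (h1 : Module.finrank K2 ↥P = 1) :
    ∃ s : Vec v, s ≠ 0 ∧ P = Submodule.span K2 {s} := by
  have hbot : P ≠ ⊥ := by
    intro h
    rw [h] at h1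
    simp [finrank_bot] at h1
  obtain ⟨s, hsP, hs0⟩ := Submodule.exists_mem_ne_zero_of_ne_bot hbot
  refine ⟨s, hs0, ?_⟩
  have hle : Submodule.span K2 {s} ≤ P := by
    rw [Submodule.span_le, Set.singleton_subset_iff]; exact hsP
  have hfr : Module.finrank K2 ↥(Submodule.span K2 {s}) = Module.finrank K2 ↥P := by
    rw [finrank_span_singleton hs0, h1]
  exact (Submodule.eq_of_le_of_finrank_eq hle hfr).symm

end NoDiv

/-- Lemma 5.10: there is no `8`-divisible set of points of `PG(v-1, 2)` of
cardinality `52`. -/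
theorem no_8_divisible_52 :
    ¬ ∃ v : ℕ, 2 ≤ v ∧ ∃ C : Finset (Submodule (ZMod 2) (Fin v → ZMod 2)),
      IsPointSet C ∧ DivisibleSet 8 C ∧ C.card = 52 := by
  rintro ⟨v, hv2, C, hpts, hdiv, hcard⟩
  classical
  obtain fc_spec := fun (P : {x // x ∈ C}) => NoDiv.point_gen P.1 (hpts P.1 P.2)
  choose fc hfc0 hfcspan using fc_spec
  have hfinj : Function.Injective fc := by
    intro a b hab
    apply Subtype.ext
    rw [hfcspan a, hfcspan b, hab]
  set S : Finset (NoDiv.Vec v) := C.attach.image fc with hS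
  have hcardS : S.card = 52 := by
    rw [hS, Finset.card_image_of_injective _ hfinj, Finset.card_attach, hcard]
  have hS0 : (0 : NoDiv.Vec v) ∉ S := by
    intro h0
    obtain ⟨a, _, ha⟩ := Finset.mem_image.mp h0
    exact hfc0 a ha
  have hdivS : ∀ φ : NoDiv.Du v, φ ≠ 0 → (S.filter fun s => φ s = 0).card % 8 = 4 := by
    intro φ hφ
    have hhyp : IsHyperplane (LinearMap.ker φ) := by
      unfold IsHyperplane
      rw [NoDiv.ker_rank φ hφ]
      congr 1
      simp [Module.finrank_pi]
    have hmod := hdiv (LinearMap.ker φ) hhyp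
    rw [hcard] at hmod
    have hmod2 : interCard C (LinearMap.ker φ) % 8 = 4 := hmod
    have hcnt : (S.filter fun s => φ s = 0).card
        = (C.filter fun P => P ≤ LinearMap.ker φ).card := by
      have him : S.filter (fun s => φ s = 0)
          = (C.attach.filter fun P => P.1 ≤ LinearMap.ker φ).image fc := by
        ext t
        simp only [hS, Finset.mem_filter, Finset.mem_image, Finset.mem_attach, true_and]
        constructor
        · rintro ⟨⟨P, rfl⟩, ht⟩
          refine ⟨P, ?_, rfl⟩
          rw [hfcspan P, Submodule.span_le, Set.singleton_subset_iff]
          exact LinearMap.mem_ker.mpr ht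
        · rintro ⟨P, hle, rfl⟩
          refine ⟨⟨P, rfl⟩, ?_⟩
          have : fc P ∈ P.1 := by
            rw [hfcspan P]
            exact Submodule.mem_span_singleton_self _
          exact LinearMap.mem_ker.mp (hle this)
      rw [him, Finset.card_image_of_injective _ hfinj]
      apply Finset.card_bij (fun a _ => a.1)
      · intro a ha
        exact Finset.mem_filter.mpr ⟨a.2, (Finset.mem_filter.mp ha).2⟩
      · intro a _ b _ hab
        exact Subtype.ext hab
      · intro b hb
        exact ⟨⟨b, (Finset.mem_filter.mp hb).1⟩,
          Finset.mem_filter.mpr ⟨Finset.mem_attach _ _, (Finset.mem_filter.mp hb).2⟩, rfl⟩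
    rw [hcnt]
    exact hmod2
  exact NoDiv.key v S hS0 hcardS hdivS
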